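/- The function h(u) := ln((1-u)/(-ln u)) - 1 - (1/2)·(1+u)·(ln u)/(1-u) has exactly one zero in the interval (0, 1). -/

import Mathlib

open Real Set
open Real Set
set_option maxHeartbeats 1000000

private lemma tan_log {x c : ℝ} (hx : 0 < x) (hc : 0 < c) :
    Real.log x ≤ x / c - 1 + Real.log c := by
  have h := Real.log_le_sub_one_of_pos (div_pos hx hc)
  rw [Real.log_div hx.ne' hc.ne'] at h
  linarith

private lemma exp3_lb : (20.0855369 : ℝ) < Real.exp 3 := by
  have h0 := Real.exp_one_gt_d9
  have h3 : Real.exp 3 = (Real.exp 1)^3 := by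
    rw [show (3:ℝ) = ((3:ℕ):ℝ)*(1:ℝ) by norm_num, Real.exp_nat_mul]
  rw [h3]; nlinarith [Real.exp_pos 1, sq_nonneg (Real.exp 1)]

private lemma exp3_ub : Real.exp 3 < (20.0855370 : ℝ) := by
  have h := Real.exp_one_lt_d9
  have h0 := Real.exp_one_gt_d9
  have h3 : Real.exp 3 = (Real.exp 1)^3 := by
    rw [show (3:ℝ) = ((3:ℕ):ℝ)*(1:ℝ) by norm_num, Real.exp_nat_mul]
  rw [h3]; nlinarith [Real.exp_pos 1, sq_nonneg (Real.exp 1)]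

private lemma exp2_ub : Real.exp 2 < (7.3890561 : ℝ) := by
  have h := Real.exp_one_lt_d9
  have h2 : Real.exp 2 = (Real.exp 1)^2 := by
    rw [show (2:ℝ) = ((2:ℕ):ℝ)*(1:ℝ) by norm_num, Real.exp_nat_mul]
  rw [h2]; nlinarith [Real.exp_pos 1, Real.exp_one_gt_d9]

private lemma expneg3_lb : (0.0497870 : ℝ) < Real.exp (-3) := by
  rw [Real.exp_neg]
  have h := exp3_ub
  have hp := Real.exp_pos 3
  have hx : Real.exp 3 * (Real.exp 3)⁻¹ = 1 := mul_inv_cancel₀ (ne_of_gt hp)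
  nlinarith [inv_pos.mpr hp]

private lemma expneg3_ub : Real.exp (-3) < (0.0497871 : ℝ) := by
  rw [Real.exp_neg]
  have h := exp3_lb
  have hp := Real.exp_pos 3
  have hx : Real.exp 3 * (Real.exp 3)⁻¹ = 1 := mul_inv_cancel₀ (ne_of_gt hp)
  nlinarith [inv_pos.mpr hp]

private lemma quad1 {u t : ℝ} (huQl : (0.049787 : ℝ) ≤ u) (huQu : u ≤ (0.1991484 : ℝ))
    (hta : (1.6137056 : ℝ) ≤ t) (ht3 : t ≤ 3) :
    (1 + u) * t < (1 + (-0.7253452 + 0.6079249 * t) - (0.0279348 - 1.255346 * u)) * (2 * (1 - u)) := by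
  nlinarith [mul_nonneg (sub_nonneg.mpr huQl) (sub_nonneg.mpr huQu),
    mul_nonneg (sub_nonneg.mpr huQl) (sub_nonneg.mpr ht3),
    mul_nonneg (sub_nonneg.mpr huQl) (sub_nonneg.mpr hta),
    mul_nonneg (sub_nonneg.mpr huQu) (sub_nonneg.mpr ht3),
    mul_nonneg (sub_nonneg.mpr huQu) (sub_nonneg.mpr hta),
    sub_nonneg.mpr hta, sub_nonneg.mpr ht3]

private lemma quad2 {u t : ℝ} (huQl : (0.1991480 : ℝ) ≤ u) (huQu : u ≤ (0.3982968 : ℝ))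
    (hta : (0.9205584 : ℝ) ≤ t) (ht3 : t ≤ (1.6137057 : ℝ)) :
    (1 + u) * t < (1 + (-1.2522221 + 1.072484 * t) - (0.1274503 - 1.5931861 * u)) * (2 * (1 - u)) := by
  nlinarith [mul_nonneg (sub_nonneg.mpr huQl) (sub_nonneg.mpr huQu),
    mul_nonneg (sub_nonneg.mpr huQl) (sub_nonneg.mpr ht3),
    mul_nonneg (sub_nonneg.mpr huQl) (sub_nonneg.mpr hta),
    mul_nonneg (sub_nonneg.mpr huQu) (sub_nonneg.mpr ht3),
    mul_nonneg (sub_nonneg.mpr huQu) (sub_nonneg.mpr hta),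
    sub_nonneg.mpr hta, sub_nonneg.mpr ht3]

private lemma quad3 {u t : ℝ} (huQl : (0.398296 : ℝ) ≤ u) (huQu : u ≤ (0.5 : ℝ))
    (hta : (0.6931471 : ℝ) ≤ t) (ht3 : t ≤ (0.9205585 : ℝ)) :
    (1 + u) * t < (1 + (-1.4153001 + 1.4475121 * t) - (0.3068529 - 2 * u)) * (2 * (1 - u)) := by
  nlinarith [mul_nonneg (sub_nonneg.mpr huQl) (sub_nonneg.mpr huQu),
    mul_nonneg (sub_nonneg.mpr huQl) (sub_nonneg.mpr ht3),
    mul_nonneg (sub_nonneg.mpr huQl) (sub_nonneg.mpr hta),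
    mul_nonneg (sub_nonneg.mpr huQu) (sub_nonneg.mpr ht3),
    mul_nonneg (sub_nonneg.mpr huQu) (sub_nonneg.mpr hta),
    sub_nonneg.mpr hta, sub_nonneg.mpr ht3]

-- middle region : exp(-3) ≤ u ≤ 1/2
private lemma mid_neg {u : ℝ} (hl : Real.exp (-3) ≤ u) (hr : u ≤ 1/2) :
    Real.log ((1 - u) / (-Real.log u)) - 1 - (1 / 2) * ((1 + u) * Real.log u) / (1 - u) < 0 := by
  have hu0 : 0 < u := lt_of_lt_of_le (Real.exp_pos _) hl
  have hu1 : u < 1 := by linarith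
  have h1u : 0 < 1 - u := by linarith
  have hlt : Real.log u < 0 := Real.log_neg hu0 hu1
  have hL2l := Real.log_two_gt_d9
  have hL2u := Real.log_two_lt_d9
  have hE3l := exp3_lb
  have hE3u := exp3_ub
  set t : ℝ := -Real.log u with htdef
  have ht0 : 0 < t := by simp only [htdef]; linarith
  have hlogu : Real.log u = -t := by rw [htdef, neg_neg]
  rw [Real.log_div h1u.ne' (by linarith : -Real.log u ≠ 0), hlogu, neg_neg]
  have htail : (1 / 2) * ((1 + u) * -t) / (1 - u) = -((1 + u) * t / (2 * (1 - u))) := by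
    field_simp
  rw [htail]
  have ht3 : t ≤ 3 := by
    have h := Real.log_le_log (Real.exp_pos (-3)) hl
    rw [Real.log_exp] at h
    simp only [htdef]; linarith
  suffices hdiv : (1 + u) * t / (2 * (1 - u)) < 1 + Real.log t - Real.log (1 - u) by linarith
  rw [div_lt_iff₀ (by linarith : (0:ℝ) < 2 * (1 - u))]
  rcases le_or_gt u (4 * Real.exp (-3)) with hc | hc
  · -- chunk 1 : u ∈ [exp(-3), 4 exp(-3)], t ∈ [1.6137056, 3]
    have huQl : (0.049787 : ℝ) ≤ u := by nlinarith [expneg3_lb]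
    have huQu : u ≤ (0.1991484 : ℝ) := by nlinarith [expneg3_ub]
    have hta : (1.6137056 : ℝ) ≤ t := by
      have h := Real.log_le_log hu0 hc
      rw [Real.log_mul (by norm_num) (Real.exp_ne_zero _), Real.log_exp,
        show (4:ℝ) = 2^2 by norm_num, Real.log_pow] at h
      push_cast at h
      simp only [htdef]; linarith
    have hA0 := tan_log h1u (show (0:ℝ) < 16 / Real.exp 3 by positivity)
    rw [Real.log_div (by norm_num) (Real.exp_ne_zero _), Real.log_exp,
      show (16:ℝ) = 2^4 by norm_num, Real.log_pow, div_div_eq_mul_div] at hA0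
    push_cast at hA0
    have hA : Real.log (1 - u) ≤ 0.0279348 - 1.255346 * u := by
      nlinarith [mul_le_mul_of_nonneg_left hE3u.le h1u.le]
    have hB0 := tan_log (show (0:ℝ) < 8 / Real.exp 1 by positivity) ht0
    rw [Real.log_div (by norm_num) (Real.exp_ne_zero _), Real.log_exp,
      show (8:ℝ) = 2^3 by norm_num, Real.log_pow] at hB0
    push_cast at hB0
    have hc2 : 8 / Real.exp 1 ≤ (2.9430356 : ℝ) := by
      rw [div_le_iff₀ (Real.exp_pos 1)]
      nlinarith [Real.exp_one_gt_d9]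
    have hc2' : (8 / Real.exp 1) / t ≤ (2.9430356 : ℝ) / t := by gcongr
    have hharm : (2.9430356 : ℝ) / t ≤ 2.8047867 - 0.6079249 * t := by
      rw [div_le_iff₀ ht0]
      nlinarith [mul_nonneg (sub_nonneg.mpr hta) (sub_nonneg.mpr ht3), sq_nonneg t, ht0.le]
    have hB : -0.7253452 + 0.6079249 * t ≤ Real.log t := by linarith
    have hAx : (0:ℝ) ≤ 0.0279348 - 1.255346 * u - Real.log (1 - u) := by linarith
    have hBx : (0:ℝ) ≤ Real.log t - (-0.7253452 + 0.6079249 * t) := by linarith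
    nlinarith [quad1 huQl huQu hta ht3, mul_nonneg hAx h1u.le, mul_nonneg hBx h1u.le]
  · rcases le_or_gt u (8 * Real.exp (-3)) with hc8 | hc8
    · -- chunk 2 : u ∈ [4 exp(-3), 8 exp(-3)], t ∈ [0.9205584, 1.6137057]
      have huQl : (0.1991480 : ℝ) ≤ u := by nlinarith [expneg3_lb]
      have huQu : u ≤ (0.3982968 : ℝ) := by nlinarith [expneg3_ub]
      have hta : (0.9205584 : ℝ) ≤ t := by
        have h := Real.log_le_log hu0 hc8
        rw [Real.log_mul (by norm_num) (Real.exp_ne_zero _), Real.log_exp,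
          show (8:ℝ) = 2^3 by norm_num, Real.log_pow] at h
        push_cast at h
        simp only [htdef]; linarith
      have htb : t ≤ (1.6137057 : ℝ) := by
        have h := Real.log_le_log (by positivity : (0:ℝ) < 4 * Real.exp (-3)) hc.le
        rw [Real.log_mul (by norm_num) (Real.exp_ne_zero _), Real.log_exp,
          show (4:ℝ) = 2^2 by norm_num, Real.log_pow] at h
        push_cast at h
        simp only [htdef]; linarith
      have hA0 := tan_log h1u (show (0:ℝ) < Real.exp 3 / 32 by positivity)
      rw [Real.log_div (Real.exp_ne_zero _) (by norm_num), Real.log_exp,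
        show (32:ℝ) = 2^5 by norm_num, Real.log_pow, div_div_eq_mul_div] at hA0
      push_cast at hA0
      norm_num at hA0
      -- hA0 : log (1-u) ≤ (1-u) * 32 / exp 3 - 1 + (3 - 5 log 2)
      have hr32 : (32:ℝ) / Real.exp 3 ≤ 32 / 20.0855369 := by
        rw [div_le_div_iff₀ (Real.exp_pos 3) (by norm_num : (0:ℝ) < 20.0855369)]
        nlinarith [hE3l]
      have h32 : (1 - u) * 32 / Real.exp 3 ≤ (1 - u) * (32 / 20.0855369) := by
        rw [mul_div_assoc]
        exact mul_le_mul_of_nonneg_left hr32 h1u.le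
      have hA : Real.log (1 - u) ≤ 0.1274503 - 1.5931861 * u := by linarith
      have hB0 := tan_log (show (0:ℝ) < 32 / Real.exp 3 by positivity) ht0
      rw [Real.log_div (by norm_num) (Real.exp_ne_zero _), Real.log_exp,
        show (32:ℝ) = 2^5 by norm_num, Real.log_pow] at hB0
      push_cast at hB0
      norm_num at hB0
      have hc2 : 32 / Real.exp 3 ≤ (1.5931862 : ℝ) := by
        rw [div_le_iff₀ (Real.exp_pos 3)]
        nlinarith [hE3l]
      have hc2' : 32 / Real.exp 3 / t ≤ (1.5931862 : ℝ) / t := by gcongr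
      have hharm : (1.5931862 : ℝ) / t ≤ 2.717958 - 1.072484 * t := by
        rw [div_le_iff₀ ht0]
        nlinarith [mul_nonneg (sub_nonneg.mpr hta) (sub_nonneg.mpr htb), sq_nonneg t, ht0.le]
      have hB : -1.2522221 + 1.072484 * t ≤ Real.log t := by linarith
      have hAx : (0:ℝ) ≤ 0.1274503 - 1.5931861 * u - Real.log (1 - u) := by linarith
      have hBx : (0:ℝ) ≤ Real.log t - (-1.2522221 + 1.072484 * t) := by linarith
      nlinarith [quad2 huQl huQu hta htb, mul_nonneg hAx h1u.le, mul_nonneg hBx h1u.le]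
    · -- chunk 3 : u ∈ [8 exp(-3), 1/2], t ∈ [0.6931471, 0.9205585]
      have huQl : (0.398296 : ℝ) ≤ u := by nlinarith [expneg3_lb]
      have hta : (0.6931471 : ℝ) ≤ t := by
        have h := Real.log_le_log hu0 hr
        rw [show (1:ℝ)/2 = 2⁻¹ by norm_num, Real.log_inv] at h
        simp only [htdef]; linarith
      have htb : t ≤ (0.9205585 : ℝ) := by
        have h := Real.log_le_log (by positivity : (0:ℝ) < 8 * Real.exp (-3)) hc8.le
        rw [Real.log_mul (by norm_num) (Real.exp_ne_zero _), Real.log_exp,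
          show (8:ℝ) = 2^3 by norm_num, Real.log_pow] at h
        push_cast at h
        simp only [htdef]; linarith
      have hA0 := tan_log h1u (show (0:ℝ) < (1:ℝ)/2 by norm_num)
      rw [show (1:ℝ)/2 = 2⁻¹ by norm_num, Real.log_inv] at hA0
      have hA : Real.log (1 - u) ≤ 0.3068529 - 2 * u := by
        have hdd : (1 - u) / (2:ℝ)⁻¹ = 2 * (1 - u) := by ring
        rw [hdd] at hA0
        linarith
      have hB0 := tan_log (show (0:ℝ) < Real.exp 2 / 8 by positivity) ht0
      rw [Real.log_div (Real.exp_ne_zero _) (by norm_num), Real.log_exp,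
        show (8:ℝ) = 2^3 by norm_num, Real.log_pow] at hB0
      push_cast at hB0
      have hc2 : Real.exp 2 / 8 ≤ (0.9236321 : ℝ) := by
        rw [div_le_iff₀ (by norm_num : (0:ℝ) < 8)]
        nlinarith [exp2_ub]
      have hc2' : (Real.exp 2 / 8) / t ≤ (0.9236321 : ℝ) / t := by gcongr
      have hharm : (0.9236321 : ℝ) / t ≤ 2.3358585 - 1.4475121 * t := by
        rw [div_le_iff₀ ht0]
        nlinarith [mul_nonneg (sub_nonneg.mpr hta) (sub_nonneg.mpr htb), sq_nonneg t, ht0.le]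
      have hB : -1.4153001 + 1.4475121 * t ≤ Real.log t := by linarith
      have hAx : (0:ℝ) ≤ 0.3068529 - 2 * u - Real.log (1 - u) := by linarith
      have hBx : (0:ℝ) ≤ Real.log t - (-1.4153001 + 1.4475121 * t) := by linarith
      nlinarith [quad3 huQl (by linarith : u ≤ (0.5:ℝ)) hta htb, mul_nonneg hAx h1u.le, mul_nonneg hBx h1u.le]

-- high region : 1/2 ≤ u < 1
private lemma hi_neg {u : ℝ} (hl : 1/2 ≤ u) (hr : u < 1) :
    Real.log ((1 - u) / (-Real.log u)) - 1 - (1 / 2) * ((1 + u) * Real.log u) / (1 - u) < 0 := by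
  have hu0 : 0 < u := by linarith
  have h1u : 0 < 1 - u := by linarith
  have hlt : Real.log u < 0 := Real.log_neg hu0 hr
  set t : ℝ := -Real.log u with htdef
  have ht0 : 0 < t := by simp only [htdef]; linarith
  have hlogu : Real.log u = -t := by rw [htdef, neg_neg]
  have htl : 1 - u < t := by
    have := Real.log_lt_sub_one_of_pos hu0 (by linarith : u ≠ 1)
    simp only [htdef]; linarith
  have htu : u * t < 1 - u := by
    have h2 := Real.log_lt_sub_one_of_pos (show (0:ℝ) < u⁻¹ by positivity)
      (by
        intro h
        have : u = 1 := by field_simp at h; linarith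
        linarith)
    rw [Real.log_inv] at h2
    have h3 : t < u⁻¹ - 1 := by simp only [htdef]; linarith
    have h4 : u * t < u * (u⁻¹ - 1) := by nlinarith
    have h5 : u * (u⁻¹ - 1) = 1 - u := by field_simp
    rw [h5] at h4
    exact h4
  rw [Real.log_div h1u.ne' (by linarith : -Real.log u ≠ 0), hlogu, neg_neg]
  have hA : Real.log (1 - u) - Real.log t ≤ (1 - u) / t - 1 := by
    have := tan_log h1u ht0
    linarith
  have key : (1 + u) * t ^ 2 - 4 * t * (1 - u) + 2 * (1 - u) ^ 2 < 0 := by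
    nlinarith [mul_pos (sub_pos.mpr htl) (sub_pos.mpr htu), sq_nonneg (1 - u),
      mul_nonneg (mul_pos (sub_pos.mpr htl) (sub_pos.mpr htu)).le h1u.le,
      mul_nonneg (mul_nonneg (sub_pos.mpr htl).le (sub_nonneg.mpr hl)) h1u.le,
      mul_nonneg (mul_nonneg (mul_nonneg (sub_pos.mpr htl).le (by linarith : (0:ℝ) ≤ 2*u - 1)) h1u.le) h1u.le,
      mul_pos h1u ht0, mul_pos hu0 ht0]
  have hfrac : (1 - u) / t - 2 + (1 + u) * t / (2 * (1 - u))
      = ((1 + u) * t ^ 2 - 4 * t * (1 - u) + 2 * (1 - u) ^ 2) / (2 * t * (1 - u)) := by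
    field_simp
    ring
  have hneg : (1 - u) / t - 2 + (1 + u) * t / (2 * (1 - u)) < 0 := by
    rw [hfrac]
    exact div_neg_of_neg_of_pos key (by positivity)
  have htail : (1 / 2) * ((1 + u) * -t) / (1 - u) = -((1 + u) * t / (2 * (1 - u))) := by
    field_simp
  rw [htail]
  linarith

noncomputable def fma (u : ℝ) : ℝ :=
  Real.log ((1 - u) / (-Real.log u)) - 1 - (1 / 2) * ((1 + u) * Real.log u) / (1 - u)

noncomputable def Dlow (u : ℝ) : ℝ :=
  -1/(1-u) - 1/(u*Real.log u) - Real.log u/(1-u)^2 - (1+u)/(2*u*(1-u))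

lemma fma_hasDeriv {u : ℝ} (hu0 : 0 < u) (hu1 : u < 1) :
    HasDerivAt fma (Dlow u) u := by
  have h1u : (0:ℝ) < 1 - u := by linarith
  have hlu : Real.log u < 0 := Real.log_neg hu0 hu1
  have hlune : Real.log u ≠ 0 := ne_of_lt hlu
  have hnlu : (0:ℝ) < -Real.log u := by linarith
  have d1 : HasDerivAt (fun x : ℝ => 1 - x) (-1) u := by
    simpa using (hasDerivAt_id u).const_sub 1
  have dlogu : HasDerivAt Real.log u⁻¹ u := Real.hasDerivAt_log hu0.ne'
  have dneglog : HasDerivAt (fun x : ℝ => -Real.log x) (-u⁻¹) u := dlogu.neg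
  have dw : HasDerivAt (fun x : ℝ => (1 - x) / (-Real.log x))
      ((-1 * (-Real.log u) - (1 - u) * (-u⁻¹)) / (-Real.log u)^2) u :=
    d1.div dneglog hnlu.ne'
  have hwne : (1 - u) / (-Real.log u) ≠ 0 := by positivity
  have dlogw : HasDerivAt (fun x : ℝ => Real.log ((1 - x) / (-Real.log x)))
      (((-1 * (-Real.log u) - (1 - u) * (-u⁻¹)) / (-Real.log u)^2) / ((1 - u) / (-Real.log u))) u :=
    dw.log hwne
  have dnum : HasDerivAt (fun x : ℝ => (1 / 2) * ((1 + x) * Real.log x))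
      ((1 / 2) * (1 * Real.log u + (1 + u) * u⁻¹)) u := by
    exact (((hasDerivAt_id u).const_add 1).mul dlogu).const_mul (1/2)
  have dq : HasDerivAt (fun x : ℝ => (1 / 2) * ((1 + x) * Real.log x) / (1 - x))
      (((1 / 2) * (1 * Real.log u + (1 + u) * u⁻¹) * (1 - u) -
        (1 / 2) * ((1 + u) * Real.log u) * (-1)) / (1 - u)^2) u :=
    dnum.div d1 h1u.ne'
  have dfull := (dlogw.sub_const 1).sub dq
  convert dfull using 1
  · rfl
  · rfl
  · rfl
  rw [Dlow]
  field_simp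
  ring

lemma Dlow_neg {u : ℝ} (hu0 : 0 < u) (hua : u ≤ Real.exp (-3)) : Dlow u < 0 := by
  have hu1 : u < 1 := lt_of_le_of_lt hua (by linarith [expneg3_ub])
  have h1u : (0:ℝ) < 1 - u := by linarith
  have hlu : Real.log u < 0 := Real.log_neg hu0 hu1
  set t : ℝ := -Real.log u with htdef
  have ht0 : 0 < t := by simp only [htdef]; linarith
  have hlogu : Real.log u = -t := by rw [htdef, neg_neg]
  have ht3 : 3 ≤ t := by
    have h := Real.log_le_log hu0 hua
    rw [Real.log_exp] at h
    simp only [htdef]; linarith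
  have huq : u ≤ 0.0497871 := le_trans hua expneg3_ub.le
  have hut : u * t ≤ 0.0497871 + 2 * u := by
    have h7 := tan_log (show (0:ℝ) < u⁻¹ by positivity) (Real.exp_pos 3)
    rw [Real.log_inv, Real.log_exp] at h7
    have h8 : t ≤ u⁻¹ / Real.exp 3 + 2 := by simp only [htdef]; linarith
    have h9 : u * t ≤ u * (u⁻¹ / Real.exp 3 + 2) := by nlinarith
    have h10 : u * (u⁻¹ / Real.exp 3 + 2) = (Real.exp 3)⁻¹ + 2 * u := by
      field_simp
    rw [h10] at h9
    have h11 : (Real.exp 3)⁻¹ < 0.0497871 := by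
      rw [← Real.exp_neg]; exact expneg3_ub
    linarith
  have hW : Dlow u * (u * t * (1 - u)^2)
      = (1 - u)^2 + u * t^2 - t * (1 - u) * (1 + 3*u) / 2 := by
    rw [Dlow, hlogu]
    field_simp
    ring
  have h1 : u * t * t ≤ (0.0497871 + 2*u) * t := by nlinarith
  have h2 : (1 - u)^2 ≤ 1 := by nlinarith
  have hbr : 1/3 + 0.0497871 + 2*u - (1 - u)*(1 + 3*u)/2 ≤ -0.06 := by nlinarith
  have h4 : t * (1/3 + 0.0497871 + 2*u - (1 - u)*(1 + 3*u)/2) ≤ t * (-0.06) :=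
    mul_le_mul_of_nonneg_left hbr ht0.le
  have hWneg : (1 - u)^2 + u * t^2 - t * (1 - u) * (1 + 3*u) / 2 < 0 := by
    nlinarith [h1, h2, h4, ht3]
  by_contra hcon
  push_neg at hcon
  nlinarith [hW, hWneg, mul_nonneg hcon (mul_pos (mul_pos hu0 ht0) (pow_pos h1u 2)).le]

lemma fma_anti : StrictAntiOn fma (Set.Ioc 0 (Real.exp (-3))) := by
  have ha1 : Real.exp (-3) < 1 := by linarith [expneg3_ub]
  apply strictAntiOn_of_deriv_neg (convex_Ioc _ _)
  · intro x hx
    exact (fma_hasDeriv hx.1 (lt_of_le_of_lt hx.2 ha1)).continuousAt.continuousWithinAt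
  · intro x hx
    rw [interior_Ioc] at hx
    rw [(fma_hasDeriv hx.1 (lt_trans hx.2 ha1)).deriv]
    exact Dlow_neg hx.1 hx.2.le

lemma fma_pos_at : 0 < fma (Real.exp (-7)) := by
  have hL2u := Real.log_two_lt_d9
  set u : ℝ := Real.exp (-7) with hu
  have hu0 : 0 < u := Real.exp_pos _
  have huq : u < 0.001 := by
    have h7 : (1000:ℝ) < Real.exp 7 := by
      have h3 : Real.exp 7 = (Real.exp 1)^7 := by
        rw [show (7:ℝ) = ((7:ℕ):ℝ)*(1:ℝ) by norm_num, Real.exp_nat_mul]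
      have hpw := pow_le_pow_left₀ (by norm_num : (0:ℝ) ≤ 2.7182818283)
        Real.exp_one_gt_d9.le 7
      have : (1000:ℝ) < 2.7182818283^7 := by norm_num
      rw [h3]; linarith
    have hp := Real.exp_pos 7
    have hx : Real.exp 7 * (Real.exp 7)⁻¹ = 1 := mul_inv_cancel₀ (ne_of_gt hp)
    rw [hu, Real.exp_neg]
    nlinarith [inv_pos.mpr hp]
  have h1u : (0:ℝ) < 1 - u := by linarith
  have hlog : Real.log u = -7 := by rw [hu, Real.log_exp]
  rw [fma, hlog]
  have hne7 : -(-7 : ℝ) ≠ 0 := by norm_num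
  rw [Real.log_div h1u.ne' hne7]
  have hlog7 : Real.log (-(-7:ℝ)) ≤ 3 * Real.log 2 := by
    have h8 : Real.log (-(-7:ℝ)) ≤ Real.log 8 := by
      apply Real.log_le_log (by norm_num)
      norm_num
    rw [show (8:ℝ) = 2^3 by norm_num, Real.log_pow] at h8
    push_cast at h8
    linarith
  have hlog1u : 1 - 1/(1-u) ≤ Real.log (1 - u) := by
    have h := tan_log (show (0:ℝ) < 1 by norm_num) h1u
    rw [Real.log_one] at h
    linarith
  have hinv : 1/(1-u) ≤ 1.002 := by
    rw [div_le_iff₀ h1u]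
    nlinarith
  have htail : (1 / 2) * ((1 + u) * (-7:ℝ)) / (1 - u) = -(3.5 * (1 + u) / (1 - u)) := by
    field_simp
    ring
  rw [htail]
  have hge : (3.5:ℝ) ≤ 3.5 * (1 + u) / (1 - u) := by
    rw [le_div_iff₀ h1u]
    nlinarith
  norm_num at hlog7 ⊢
  linarith

theorem stmt_6 :
    ∃! u : ℝ, u ∈ Set.Ioo (0 : ℝ) 1 ∧
      Real.log ((1 - u) / (-Real.log u)) - 1
        - (1 / 2) * ((1 + u) * Real.log u) / (1 - u) = 0 := by
  have ha2lt1 : Real.exp (-3) < 1 := by linarith [expneg3_ub]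
  have ha2half : Real.exp (-3) ≤ 1/2 := by linarith [expneg3_ub]
  have ha12 : Real.exp (-7) < Real.exp (-3) := Real.exp_lt_exp.mpr (by norm_num)
  have hcont : ContinuousOn fma (Set.Icc (Real.exp (-7)) (Real.exp (-3))) := by
    intro z hz
    have hz0 : 0 < z := lt_of_lt_of_le (Real.exp_pos _) hz.1
    have hz1 : z < 1 := lt_of_le_of_lt hz.2 ha2lt1
    exact (fma_hasDeriv hz0 hz1).continuousAt.continuousWithinAt
  have hneg2 : fma (Real.exp (-3)) < 0 := mid_neg le_rfl ha2half
  have hivt := intermediate_value_Ioo' ha12.le hcont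
  have h0mem : (0:ℝ) ∈ Set.Ioo (fma (Real.exp (-3))) (fma (Real.exp (-7))) :=
    ⟨hneg2, fma_pos_at⟩
  obtain ⟨x, hxmem, hfx⟩ := hivt h0mem
  have hx0 : 0 < x := lt_trans (Real.exp_pos _) hxmem.1
  have hx1 : x < 1 := lt_trans hxmem.2 ha2lt1
  refine ⟨x, ⟨⟨hx0, hx1⟩, hfx⟩, ?_⟩
  rintro y ⟨⟨hy0, hy1⟩, hyeq⟩
  have hy2 : y ≤ Real.exp (-3) := by
    by_contra hcy
    push_neg at hcy
    rcases le_or_gt y (1/2) with h | h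
    · exact (mid_neg hcy.le h).ne hyeq
    · exact (hi_neg h.le hy1).ne hyeq
  have hyf : fma y = 0 := hyeq
  exact fma_anti.injOn ⟨hy0, hy2⟩ ⟨hx0, hxmem.2.le⟩ (hyf.trans hfx.symm)
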